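/- The generalized Leibniz rule, defined on formal series (Σ_{i≤n} a_i ∂^i)(Σ_{j≤m} b_j ∂^j) := Σ_{i,j} Σ_{k≥0} binom(i,k) a_i (∂^k b_j) ∂^{i+j-k}, endows the set P of pseudodifferential operators over a commutative ring A with derivation ∂ with the structure of an associative ring with identity element 1·∂^0. -/

import Mathlib

/-- A pseudodifferential operator over `A`: a formal series `Σ_{i ≤ n} a_i ∂^i`,
encoded by its coefficient function `ℤ → A`, with support bounded above. -/
def PDO (A : Type) [Ring A] : Type := {f : ℤ → A // ∃ n : ℤ, ∀ i > n, f i = 0}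

variable {A : Type} [Ring A]

/-- The zero pseudodifferential operator. -/
def pdoZero (A : Type) [Ring A] : PDO A := ⟨fun _ => 0, ⟨0, fun _ _ => rfl⟩⟩

/-- The identity pseudodifferential operator `1·∂^0`. -/
def pdoOne (A : Type) [Ring A] : PDO A :=
  ⟨fun i => if i = 0 then 1 else 0, ⟨0, fun i hi => if_neg (by omega)⟩⟩

/-- The pseudodifferential operator `∂` itself, i.e. `1·∂^1`. -/
def pdoDel (A : Type) [Ring A] : PDO A :=
  ⟨fun i => if i = 1 then 1 else 0, ⟨1, fun i hi => if_neg (by omega)⟩⟩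

/-- A constant-symbol pdo `a·∂^0`. -/
def pdoConst (a : A) : PDO A :=
  ⟨fun i => if i = 0 then a else 0, ⟨0, fun i hi => if_neg (by omega)⟩⟩

/-- Pointwise addition of pseudodifferential operators. -/
def pdoAdd (P Q : PDO A) : PDO A :=
  ⟨fun i => P.1 i + Q.1 i,
   ⟨max P.2.choose Q.2.choose, fun i hi => by
      dsimp only
      rw [P.2.choose_spec i (lt_of_le_of_lt (le_max_left _ _) hi),
          Q.2.choose_spec i (lt_of_le_of_lt (le_max_right _ _) hi), add_zero]⟩⟩

/-- Pointwise negation. -/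
def pdoNeg (P : PDO A) : PDO A :=
  ⟨fun i => -(P.1 i), ⟨P.2.choose, fun i hi => by dsimp only; rw [P.2.choose_spec i hi, neg_zero]⟩⟩

/-- The generalized Leibniz product of pseudodifferential operators
`(Σ_{i≤n} a_i ∂^i)(Σ_{j≤m} b_j ∂^j) = Σ_{i,j} Σ_{k≥0} binom(i,k) a_i (∂^k b_j) ∂^{i+j-k}`,
where `binom(i,k)` is the generalized binomial coefficient (`Ring.choose` on `ℤ`)
and `d` plays the role of the derivation `∂` of `A`. -/
noncomputable def pdoMul (d : A → A) (P Q : PDO A) : PDO A :=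
  ⟨fun N => ∑ i ∈ Finset.Icc (N - Q.2.choose) P.2.choose,
      ∑ j ∈ Finset.Icc (N - i) Q.2.choose,
        (Ring.choose i (i + j - N).toNat : ℤ) • (P.1 i * d^[(i + j - N).toNat] (Q.1 j)),
   ⟨P.2.choose + Q.2.choose, fun N hN => by
      dsimp only
      rw [Finset.Icc_eq_empty (by omega), Finset.sum_empty]⟩⟩

/-- `P` has order `≤ n` : all coefficients above `n` vanish. -/
def pdoOrderLE (P : PDO A) (n : ℤ) : Prop := ∀ i > n, P.1 i = 0

open Finset

section DerAux
variable {A : Type} [CommRing A] {d : A → A}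

lemma d_zero' (hadd : ∀ a b : A, d (a + b) = d a + d b) : d 0 = 0 := by
  have h := hadd 0 0
  rw [add_zero] at h
  exact left_eq_add.mp h

lemma d_sum (hadd : ∀ a b : A, d (a + b) = d a + d b) {ι : Type*} (s : Finset ι) (f : ι → A) :
    d (∑ x ∈ s, f x) = ∑ x ∈ s, d (f x) := by
  classical
  induction s using Finset.cons_induction with
  | empty => simp [d_zero' hadd]
  | cons a s ha ih => rw [Finset.sum_cons, hadd, ih, Finset.sum_cons]

lemma d_nsmul (hadd : ∀ a b : A, d (a + b) = d a + d b) (n : ℕ) (a : A) :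
    d (n • a) = n • d a := by
  induction n with
  | zero => simpa using d_zero' hadd
  | succ n ih => rw [succ_nsmul, succ_nsmul, hadd, ih]

lemma iter_leibniz (hadd : ∀ a b : A, d (a + b) = d a + d b)
    (hleib : ∀ a b : A, d (a * b) = a * d b + d a * b) (n : ℕ) (p q : A) :
    d^[n] (p * q) = ∑ k ∈ range n.succ, (n.choose k • (d^[n - k] p * d^[k] q)) := by
  induction n with
  | zero => simp [Finset.range]
  | succ n IH =>
    calc
      d^[n + 1] (p * q) =
          d (∑ k ∈ range n.succ,
              n.choose k • (d^[n - k] p * d^[k] q)) := by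
        rw [Function.iterate_succ_apply', IH]
      _ = (∑ k ∈ range n.succ,
            n.choose k • (d^[n - k + 1] p * d^[k] q)) +
          ∑ k ∈ range n.succ,
            n.choose k • (d^[n - k] p * d^[k + 1] q) := by
        rw [d_sum hadd, ← sum_add_distrib]
        refine sum_congr rfl fun k _ => ?_
        rw [d_nsmul hadd, hleib, ← smul_add, Function.iterate_succ_apply',
          Function.iterate_succ_apply', add_comm]
      _ = (∑ k ∈ range n.succ,
                n.choose k.succ • (d^[n - k] p * d^[k + 1] q)) +
              1 • (d^[n + 1] p * d^[0] q) +
            ∑ k ∈ range n.succ, n.choose k • (d^[n - k] p * d^[k + 1] q) :=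
        ?_
      _ = ((∑ k ∈ range n.succ, n.choose k • (d^[n - k] p * d^[k + 1] q)) +
              ∑ k ∈ range n.succ,
                n.choose k.succ • (d^[n - k] p * d^[k + 1] q)) +
            1 • (d^[n + 1] p * d^[0] q) := by
        rw [add_comm, add_assoc]
      _ = (∑ i ∈ range n.succ,
              (n + 1).choose (i + 1) • (d^[n + 1 - (i + 1)] p * d^[i + 1] q)) +
            1 • (d^[n + 1] p * d^[0] q) := by
        simp_rw [Nat.choose_succ_succ, Nat.succ_sub_succ, add_smul, sum_add_distrib]
      _ = ∑ k ∈ range n.succ.succ,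
            n.succ.choose k • (d^[n.succ - k] p * d^[k] q) := by
        rw [sum_range_succ' _ n.succ, Nat.choose_zero_right, tsub_zero]
    congr
    refine (sum_range_succ' _ _).trans (congr_arg₂ (· + ·) ?_ ?_)
    · rw [sum_range_succ, Nat.choose_succ_self, zero_smul, add_zero]
      refine sum_congr rfl fun k hk => ?_
      rw [mem_range] at hk
      congr
      omega
    · rw [Nat.choose_zero_right, tsub_zero]

end DerAux
section DerAux2
variable {A : Type} [CommRing A] {d : A → A}

lemma d_one' (hleib : ∀ a b : A, d (a * b) = a * d b + d a * b) : d 1 = 0 := by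
  have h := hleib 1 1
  rw [mul_one, one_mul, mul_one] at h
  exact left_eq_add.mp h

lemma iter_d_zero (hadd : ∀ a b : A, d (a + b) = d a + d b) (k : ℕ) : d^[k] 0 = 0 :=
  Function.iterate_fixed (d_zero' hadd) k

lemma iter_d_one (hadd : ∀ a b : A, d (a + b) = d a + d b)
    (hleib : ∀ a b : A, d (a * b) = a * d b + d a * b) (k : ℕ) : d^[k + 1] 1 = 0 := by
  rw [Function.iterate_succ_apply, d_one' hleib, iter_d_zero hadd]

lemma iter_d_add (hadd : ∀ a b : A, d (a + b) = d a + d b) (k : ℕ) (a b : A) :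
    d^[k] (a + b) = d^[k] a + d^[k] b := by
  induction k with
  | zero => rfl
  | succ k ih => rw [Function.iterate_succ_apply', ih, hadd,
      Function.iterate_succ_apply', Function.iterate_succ_apply']

lemma iter_d_sum (hadd : ∀ a b : A, d (a + b) = d a + d b) (k : ℕ)
    {ι : Type*} (s : Finset ι) (f : ι → A) :
    d^[k] (∑ x ∈ s, f x) = ∑ x ∈ s, d^[k] (f x) := by
  induction k with
  | zero => rfl
  | succ k ih => rw [Function.iterate_succ_apply', ih, d_sum hadd,
      ]
      <;> exact sum_congr rfl fun x _ => (Function.iterate_succ_apply' d k (f x)).symm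

lemma d_zsmul (hadd : ∀ a b : A, d (a + b) = d a + d b) (z : ℤ) (a : A) :
    d (z • a) = z • d a :=
  map_zsmul (AddMonoidHom.mk' d hadd) z a

lemma iter_d_zsmul (hadd : ∀ a b : A, d (a + b) = d a + d b) (k : ℕ) (z : ℤ) (a : A) :
    d^[k] (z • a) = z • d^[k] a := by
  induction k with
  | zero => rfl
  | succ k ih => rw [Function.iterate_succ_apply', ih, d_zsmul hadd,
      Function.iterate_succ_apply']

end DerAux2

section OneCoeff
variable {A : Type} [CommRing A]

lemma pdoOne_coeff (i : ℤ) : (pdoOne A).1 i = if i = 0 then 1 else 0 := rfl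

end OneCoeff

lemma key_binom (i j : ℤ) (α β : ℕ) :
    ∑ u ∈ range (β + 1), ((α + u).choose α : ℤ) * Ring.choose i (α + u) * Ring.choose j (β - u)
      = Ring.choose i α * Ring.choose (i - α + j) β := by
  have h1 : ∀ u : ℕ, ((α + u).choose α : ℤ) * Ring.choose i (α + u)
      = Ring.choose i α * Ring.choose (i - α) u := by
    intro u
    have := Ring.choose_smul_choose i (Nat.le_add_right α u)
    rw [nsmul_eq_mul, Nat.add_sub_cancel_left] at this
    rw [this]
  calc ∑ u ∈ range (β + 1), ((α + u).choose α : ℤ) * Ring.choose i (α + u) * Ring.choose j (β - u)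
      = Ring.choose i α * ∑ u ∈ range (β + 1), Ring.choose (i - α) u * Ring.choose j (β - u) := by
        rw [mul_sum]; exact sum_congr rfl fun u _ => by rw [h1 u, mul_assoc]
    _ = Ring.choose i α * Ring.choose (i - α + j) β := by
        congr 1
        rw [Ring.add_choose_eq β (Commute.all _ _), Finset.Nat.sum_antidiagonal_eq_sum_range_succ_mk]

lemma Icc_shift_sum' {A : Type*} [AddCommMonoid A] {a b : ℤ} (hab : a ≤ b) (f : ℤ → A) :
    ∑ K ∈ Icc a b, f K = ∑ u ∈ range ((b - a).toNat + 1), f (a + u) := by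
  refine Finset.sum_nbij' (fun K => (K - a).toNat) (fun u => a + (u : ℤ)) ?_ ?_ ?_ ?_ ?_
  · intro K hK; simp only [mem_Icc] at hK; simp only [mem_range]; omega
  · intro u hu; simp only [mem_range] at hu; simp only [mem_Icc]; omega
  · intro K hK; simp only [mem_Icc] at hK
    show a + ((K - a).toNat : ℤ) = K
    omega
  · intro u hu; simp only [mem_range] at hu
    show ((a + (u : ℤ) - a).toNat : ℕ) = u
    omega
  · intro K hK; simp only [mem_Icc] at hK
    show f K = f (a + ((K - a).toNat : ℤ))
    congr 1
    omega

/-- The collapsed scalar sum appearing in associativity. -/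
lemma scalar_sum (i j α ktot : ℤ) (h0 : 0 ≤ α) (hk : α ≤ ktot) :
    ∑ K ∈ Icc α ktot,
        ((K.toNat.choose (K - α).toNat : ℤ) * Ring.choose i K.toNat
          * Ring.choose j (ktot - K).toNat)
      = Ring.choose i α.toNat * Ring.choose (i + j - α) ((ktot - α).toNat) := by
  rw [Icc_shift_sum' hk]
  have hβ : (ktot - α).toNat = ((ktot - α).toNat : ℕ) := rfl
  set β : ℕ := (ktot - α).toNat with hβdef
  have hrange : (ktot - α).toNat + 1 = β + 1 := rfl
  calc ∑ u ∈ range ((ktot - α).toNat + 1),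
        (((α + (u:ℤ)).toNat.choose ((α + (u:ℤ)) - α).toNat : ℤ) * Ring.choose i (α + (u:ℤ)).toNat
          * Ring.choose j (ktot - (α + (u:ℤ))).toNat)
      = ∑ u ∈ range (β + 1), ((α.toNat + u).choose α.toNat : ℤ) * Ring.choose i (α.toNat + u)
          * Ring.choose j (β - u) := by
        refine sum_congr rfl fun u hu => ?_
        simp only [mem_range] at hu
        have e1 : (α + (u:ℤ)).toNat = α.toNat + u := by omega
        have e2 : ((α + (u:ℤ)) - α).toNat = u := by omega
        have e3 : (ktot - (α + (u:ℤ))).toNat = β - u := by omega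
        have hsym : (α.toNat + u).choose α.toNat = (α.toNat + u).choose u := by
          rw [← Nat.choose_symm (Nat.le_add_right α.toNat u)]
          congr 1
          omega
        rw [e1, e2, e3, hsym]
    _ = Ring.choose i α.toNat * Ring.choose (i - α.toNat + j) β := key_binom i j α.toNat β
    _ = Ring.choose i α.toNat * Ring.choose (i + j - α) ((ktot - α).toNat) := by
        rw [Int.toNat_of_nonneg h0, ← hβdef]
        have : i - α + j = i + j - α := by ring
        rw [this]

section SumHelpers
variable {A : Type*} [AddCommMonoid A]

lemma nested_to_filter {ι : Type*} (s : Finset ι) (g1 g2 : ι → ℤ) {lo hi : ℤ}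
    (h1 : ∀ i ∈ s, lo ≤ g1 i) (h2 : ∀ i ∈ s, g2 i ≤ hi) (f : ι → ℤ → A) :
    ∑ i ∈ s, ∑ j ∈ Icc (g1 i) (g2 i), f i j
      = ∑ p ∈ (s ×ˢ Icc lo hi).filter (fun p => g1 p.1 ≤ p.2 ∧ p.2 ≤ g2 p.1), f p.1 p.2 := by
  rw [Finset.sum_filter, Finset.sum_product]
  refine sum_congr rfl fun i hi => ?_
  rw [← Finset.sum_filter]
  refine (Finset.sum_congr ?_ fun _ _ => rfl).symm
  ext j
  simp only [mem_filter, mem_Icc]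
  constructor
  · rintro ⟨⟨hj1, hj2⟩, hj3, hj4⟩; exact ⟨hj3, hj4⟩
  · rintro ⟨hj1, hj2⟩; exact ⟨⟨le_trans (h1 i hi) hj1, le_trans hj2 (h2 i hi)⟩, hj1, hj2⟩

lemma range_to_Icc (n : ℕ) (f : ℕ → A) :
    ∑ t ∈ range (n + 1), f t = ∑ tz ∈ Icc (0:ℤ) n, f tz.toNat := by
  refine Finset.sum_nbij' (fun t => (t : ℤ)) (fun tz => tz.toNat) ?_ ?_ ?_ ?_ ?_
  · intro t ht; simp only [mem_range] at ht; simp only [mem_Icc]; omega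
  · intro tz htz; simp only [mem_Icc] at htz; simp only [mem_range]; omega
  · intro t _; simp
  · intro tz htz; simp only [mem_Icc] at htz; simp; omega
  · intro t _; simp

lemma Icc_shift_sum {a b : ℤ} (hab : a ≤ b) (f : ℤ → A) :
    ∑ K ∈ Icc a b, f K = ∑ u ∈ range ((b - a).toNat + 1), f (a + u) := by
  refine Finset.sum_nbij' (fun K => (K - a).toNat) (fun u => a + (u : ℤ)) ?_ ?_ ?_ ?_ ?_
  · intro K hK; simp only [mem_Icc] at hK; simp only [mem_range]; omega
  · intro u hu; simp only [mem_range] at hu; simp only [mem_Icc]; omega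
  · intro K hK; simp only [mem_Icc] at hK
    show a + ((K - a).toNat : ℤ) = K
    omega
  · intro u hu; simp only [mem_range] at hu
    show ((a + (u : ℤ) - a).toNat : ℕ) = u
    omega
  · intro K hK; simp only [mem_Icc] at hK
    show f K = f (a + ((K - a).toNat : ℤ))
    congr 1
    omega
end SumHelpers
open Finset

section CoeffAux
variable {A : Type} [CommRing A] (d : A → A)

/-- The generic summand in `pdoMul`. -/
noncomputable def pdoTerm (P Q : PDO A) (N i j : ℤ) : A :=
  (Ring.choose i (i + j - N).toNat : ℤ) • (P.1 i * d^[(i + j - N).toNat] (Q.1 j))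

lemma pdoMul_coeff_def (P Q : PDO A) (N : ℤ) :
    (pdoMul d P Q).1 N = ∑ i ∈ Icc (N - Q.2.choose) P.2.choose,
      ∑ j ∈ Icc (N - i) Q.2.choose, pdoTerm d P Q N i j := rfl

lemma pdoTerm_sum_ext (hd0 : d 0 = 0) (P Q : PDO A) {n m n' m' : ℤ} (hn' : n ≤ n') (hm' : m ≤ m')
    (hn : ∀ i > n, P.1 i = 0) (hm : ∀ j > m, Q.1 j = 0) (N : ℤ) :
    ∑ i ∈ Icc (N - m) n, ∑ j ∈ Icc (N - i) m, pdoTerm d P Q N i j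
      = ∑ i ∈ Icc (N - m') n', ∑ j ∈ Icc (N - i) m', pdoTerm d P Q N i j := by
  have hzq : ∀ i j : ℤ, j > m → pdoTerm d P Q N i j = 0 := by
    intro i j hj
    unfold pdoTerm
    rw [hm j hj, Function.iterate_fixed hd0, mul_zero, smul_zero]
  have hzp : ∀ i j : ℤ, i > n → pdoTerm d P Q N i j = 0 := by
    intro i j hi
    unfold pdoTerm
    rw [hn i hi, zero_mul, smul_zero]
  have step1 : ∀ i : ℤ, ∑ j ∈ Icc (N - i) m, pdoTerm d P Q N i j
      = ∑ j ∈ Icc (N - i) m', pdoTerm d P Q N i j := by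
    intro i
    refine Finset.sum_subset (Finset.Icc_subset_Icc le_rfl hm') ?_
    intro j hj hj'
    simp only [mem_Icc] at hj hj'
    exact hzq i j (by omega)
  calc ∑ i ∈ Icc (N - m) n, ∑ j ∈ Icc (N - i) m, pdoTerm d P Q N i j
      = ∑ i ∈ Icc (N - m) n, ∑ j ∈ Icc (N - i) m', pdoTerm d P Q N i j :=
        sum_congr rfl fun i _ => step1 i
    _ = ∑ i ∈ Icc (N - m') n', ∑ j ∈ Icc (N - i) m', pdoTerm d P Q N i j := by
        refine Finset.sum_subset (Finset.Icc_subset_Icc (by omega) hn') ?_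
        intro i hi hi'
        simp only [mem_Icc] at hi hi'
        rcases lt_or_ge n i with h | h
        · exact Finset.sum_eq_zero fun j _ => hzp i j h
        · refine Finset.sum_eq_zero fun j hj => ?_
          simp only [mem_Icc] at hj
          exact hzq i j (by omega)

lemma pdoMul_coeff (hd0 : d 0 = 0) (P Q : PDO A) {n m : ℤ}
    (hn : ∀ i > n, P.1 i = 0) (hm : ∀ j > m, Q.1 j = 0) (N : ℤ) :
    (pdoMul d P Q).1 N
      = ∑ i ∈ Icc (N - m) n, ∑ j ∈ Icc (N - i) m, pdoTerm d P Q N i j := by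
  rw [pdoMul_coeff_def]
  have h1 := pdoTerm_sum_ext d hd0 P Q (le_max_left P.2.choose n) (le_max_left Q.2.choose m)
    P.2.choose_spec Q.2.choose_spec N
  have h2 := pdoTerm_sum_ext d hd0 P Q (le_max_right P.2.choose n) (le_max_right Q.2.choose m)
    hn hm N
  rw [h1, ← h2]

lemma pdoMul_orderLE (hd0 : d 0 = 0) (P Q : PDO A) {n m : ℤ}
    (hn : ∀ i > n, P.1 i = 0) (hm : ∀ j > m, Q.1 j = 0) :
    ∀ N > n + m, (pdoMul d P Q).1 N = 0 := by
  intro N hN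
  rw [pdoMul_coeff d hd0 P Q hn hm N]
  refine Finset.sum_eq_zero fun i hi => ?_
  simp only [mem_Icc] at hi
  rw [Finset.Icc_eq_empty (by omega), Finset.sum_empty]

end CoeffAux
section MainAux
variable {A : Type} [CommRing A] (d : A → A)

lemma PDO.ext' {P Q : PDO A} (h : ∀ N, P.1 N = Q.1 N) : P = Q :=
  Subtype.ext (funext h)

lemma pdoOne_spec : ∀ i > (0:ℤ), (pdoOne A).1 i = 0 :=
  fun i hi => if_neg (by omega)

lemma pdoOne_mul (hadd : ∀ a b : A, d (a + b) = d a + d b)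
    (P : PDO A) : pdoMul d (pdoOne A) P = P := by
  refine PDO.ext' fun N => ?_
  rw [pdoMul_coeff d (d_zero' hadd) (pdoOne A) P pdoOne_spec P.2.choose_spec N]
  by_cases hNm : N ≤ P.2.choose
  · rw [Finset.sum_eq_single_of_mem 0 (by simp only [mem_Icc]; omega) ?side]
    case side =>
      intro i hi hne
      refine Finset.sum_eq_zero fun j hj => ?_
      unfold pdoTerm
      rw [pdoOne_coeff, if_neg hne, zero_mul, smul_zero]
    rw [Finset.sum_eq_single_of_mem N (by simp only [mem_Icc]; omega) ?side2]
    case side2 =>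
      intro j hj hne
      simp only [mem_Icc] at hj
      unfold pdoTerm
      have hpos : 0 < (0 + j - N).toNat := by omega
      rw [Ring.choose_zero_pos ℤ hpos, zero_smul]
    unfold pdoTerm
    have h0 : (0 + N - N).toNat = 0 := by omega
    rw [h0, Ring.choose_zero_right, one_smul, pdoOne_coeff, if_pos rfl, one_mul,
      Function.iterate_zero_apply]
  · rw [Finset.Icc_eq_empty (by omega), Finset.sum_empty,
      P.2.choose_spec N (by omega)]

lemma pdoMul_one (hadd : ∀ a b : A, d (a + b) = d a + d b)
    (hleib : ∀ a b : A, d (a * b) = a * d b + d a * b)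
    (P : PDO A) : pdoMul d P (pdoOne A) = P := by
  refine PDO.ext' fun N => ?_
  rw [pdoMul_coeff d (d_zero' hadd) P (pdoOne A) P.2.choose_spec pdoOne_spec N]
  by_cases hNn : N ≤ P.2.choose
  · rw [Finset.sum_eq_single_of_mem N (by simp only [mem_Icc]; omega) ?side]
    case side =>
      intro i hi hne
      simp only [mem_Icc] at hi
      refine Finset.sum_eq_zero fun j hj => ?_
      simp only [mem_Icc] at hj
      unfold pdoTerm
      by_cases hj0 : j = 0
      · subst hj0
        obtain ⟨k', hk'⟩ : ∃ k', (i + 0 - N).toNat = k' + 1 := ⟨(i + 0 - N).toNat - 1, by omega⟩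
        rw [pdoOne_coeff, if_pos rfl, hk', iter_d_one hadd hleib, mul_zero, smul_zero]
      · rw [pdoOne_coeff, if_neg hj0, Function.iterate_fixed (d_zero' hadd),
          mul_zero, smul_zero]
    rw [show N - N = (0:ℤ) by ring, Finset.Icc_self, Finset.sum_singleton]
    unfold pdoTerm
    have h0 : (N + 0 - N).toNat = 0 := by omega
    rw [h0, Ring.choose_zero_right, one_smul, pdoOne_coeff, if_pos rfl,
      Function.iterate_zero_apply, mul_one]
  · rw [Finset.Icc_eq_empty (by omega), Finset.sum_empty,
      P.2.choose_spec N (by omega)]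

lemma pdoMul_add (hadd : ∀ a b : A, d (a + b) = d a + d b)
    (P Q R : PDO A) : pdoMul d P (pdoAdd Q R) = pdoAdd (pdoMul d P Q) (pdoMul d P R) := by
  refine PDO.ext' fun N => ?_
  set m : ℤ := max Q.2.choose R.2.choose with hm
  have hQ : ∀ j > m, Q.1 j = 0 := fun j hj => Q.2.choose_spec j (by omega)
  have hR : ∀ j > m, R.1 j = 0 := fun j hj => R.2.choose_spec j (by omega)
  have hQR : ∀ j > m, (pdoAdd Q R).1 j = 0 := fun j hj => by
    show Q.1 j + R.1 j = 0
    rw [hQ j hj, hR j hj, add_zero]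
  have hrhs : (pdoAdd (pdoMul d P Q) (pdoMul d P R)).1 N
      = (pdoMul d P Q).1 N + (pdoMul d P R).1 N := rfl
  rw [hrhs, pdoMul_coeff d (d_zero' hadd) P (pdoAdd Q R) P.2.choose_spec hQR N,
    pdoMul_coeff d (d_zero' hadd) P Q P.2.choose_spec hQ N,
    pdoMul_coeff d (d_zero' hadd) P R P.2.choose_spec hR N, ← Finset.sum_add_distrib]
  refine sum_congr rfl fun i _ => ?_
  rw [← Finset.sum_add_distrib]
  refine sum_congr rfl fun j _ => ?_
  unfold pdoTerm
  show _ • (P.1 i * d^[_] (Q.1 j + R.1 j)) = _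
  rw [iter_d_add hadd, mul_add, smul_add]

lemma pdoAdd_mul (hadd : ∀ a b : A, d (a + b) = d a + d b)
    (P Q R : PDO A) : pdoMul d (pdoAdd P Q) R = pdoAdd (pdoMul d P R) (pdoMul d Q R) := by
  refine PDO.ext' fun N => ?_
  set n : ℤ := max P.2.choose Q.2.choose with hn
  have hP : ∀ i > n, P.1 i = 0 := fun i hi => P.2.choose_spec i (by omega)
  have hQ : ∀ i > n, Q.1 i = 0 := fun i hi => Q.2.choose_spec i (by omega)
  have hPQ : ∀ i > n, (pdoAdd P Q).1 i = 0 := fun i hi => by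
    show P.1 i + Q.1 i = 0
    rw [hP i hi, hQ i hi, add_zero]
  have hrhs : (pdoAdd (pdoMul d P R) (pdoMul d Q R)).1 N
      = (pdoMul d P R).1 N + (pdoMul d Q R).1 N := rfl
  rw [hrhs, pdoMul_coeff d (d_zero' hadd) (pdoAdd P Q) R hPQ R.2.choose_spec N,
    pdoMul_coeff d (d_zero' hadd) P R hP R.2.choose_spec N,
    pdoMul_coeff d (d_zero' hadd) Q R hQ R.2.choose_spec N, ← Finset.sum_add_distrib]
  refine sum_congr rfl fun i _ => ?_
  rw [← Finset.sum_add_distrib]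
  refine sum_congr rfl fun j _ => ?_
  unfold pdoTerm
  show _ • ((P.1 i + Q.1 i) * _) = _
  rw [add_mul, smul_add]

end MainAux
section Assoc
variable {A : Type} [CommRing A]

set_option maxHeartbeats 1000000 in
lemma assoc_lhs (d : A → A) (hadd : ∀ a b : A, d (a + b) = d a + d b)
    (P Q R : PDO A) {n m p : ℤ}
    (hn : ∀ i > n, P.1 i = 0) (hm : ∀ j > m, Q.1 j = 0) (hp : ∀ l > p, R.1 l = 0) (N : ℤ) :
    (pdoMul d (pdoMul d P Q) R).1 N =
      ∑ z ∈ (Icc (N - m - p) n ×ˢ Icc (N - n - p) m ×ˢ Icc (N - n - m) p).sigma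
          (fun y => Icc (0:ℤ) (y.1 + y.2.1 + y.2.2 - N)),
        (Ring.choose (z.1.1 + z.1.2.1 - z.2) (z.1.1 + z.1.2.1 + z.1.2.2 - N - z.2).toNat *
            Ring.choose z.1.1 z.2.toNat : ℤ) •
          (P.1 z.1.1 * (d^[z.2.toNat] (Q.1 z.1.2.1) *
            d^[(z.1.1 + z.1.2.1 + z.1.2.2 - N - z.2).toNat] (R.1 z.1.2.2))) := by
  have hd0 : d 0 = 0 := d_zero' hadd
  have hPQ : ∀ M > n + m, (pdoMul d P Q).1 M = 0 := pdoMul_orderLE d hd0 P Q hn hm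
  have h1 : (pdoMul d (pdoMul d P Q) R).1 N
      = ∑ M ∈ Icc (N - p) (n + m), ∑ l ∈ Icc (N - M) p,
          ∑ i ∈ Icc (M - m) n, ∑ j ∈ Icc (M - i) m,
            (Ring.choose M (M + l - N).toNat * Ring.choose i (i + j - M).toNat : ℤ) •
              (P.1 i * (d^[(i + j - M).toNat] (Q.1 j) * d^[(M + l - N).toNat] (R.1 l))) := by
    rw [pdoMul_coeff d hd0 _ R hPQ hp N]
    refine sum_congr rfl fun M _ => sum_congr rfl fun l _ => ?_
    unfold pdoTerm
    rw [pdoMul_coeff d hd0 P Q hn hm M, Finset.sum_mul, Finset.smul_sum]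
    refine sum_congr rfl fun i _ => ?_
    rw [Finset.sum_mul, Finset.smul_sum]
    refine sum_congr rfl fun j _ => ?_
    unfold pdoTerm
    rw [smul_mul_assoc, smul_smul, mul_assoc]
  rw [h1, Finset.sum_sigma', Finset.sum_sigma', Finset.sum_sigma']
  refine Finset.sum_nbij'
    (fun x => ⟨(x.1.2, x.2, x.1.1.2), x.1.2 + x.2 - x.1.1.1⟩)
    (fun z => ⟨⟨⟨z.1.1 + z.1.2.1 - z.2, z.1.2.2⟩, z.1.1⟩, z.1.2.1⟩) ?_ ?_ ?_ ?_ ?_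
  · intro x hx
    simp only [mem_sigma, mem_product, mem_Icc] at hx ⊢
    omega
  · intro z hz
    simp only [mem_sigma, mem_product, mem_Icc] at hz ⊢
    omega
  · intro x _
    obtain ⟨⟨⟨M, l⟩, i⟩, j⟩ := x
    simp only
    have e : i + j - (i + j - M) = M := by omega
    rw [e]
  · intro z _
    obtain ⟨⟨i, j, l⟩, α⟩ := z
    simp only
    have e : i + j - (i + j - α) = α := by omega
    rw [e]
  · intro x _
    obtain ⟨⟨⟨M, l⟩, i⟩, j⟩ := x
    simp only
    have e1 : i + j - (i + j - M) = M := by omega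
    have e2 : i + j + l - N - (i + j - M) = M + l - N := by omega
    rw [e1, e2]
end Assoc

section Assoc2
variable {A : Type} [CommRing A]

set_option maxHeartbeats 2000000 in
lemma assoc_rhs (d : A → A) (hadd : ∀ a b : A, d (a + b) = d a + d b)
    (hleib : ∀ a b : A, d (a * b) = a * d b + d a * b)
    (P Q R : PDO A) {n m p : ℤ}
    (hn : ∀ i > n, P.1 i = 0) (hm : ∀ j > m, Q.1 j = 0) (hp : ∀ l > p, R.1 l = 0) (N : ℤ) :
    (pdoMul d P (pdoMul d Q R)).1 N =
      ∑ z ∈ (Icc (N - m - p) n ×ˢ Icc (N - n - p) m ×ˢ Icc (N - n - m) p).sigma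
          (fun y => Icc (0:ℤ) (y.1 + y.2.1 + y.2.2 - N)),
        (Ring.choose (z.1.1 + z.1.2.1 - z.2) (z.1.1 + z.1.2.1 + z.1.2.2 - N - z.2).toNat *
            Ring.choose z.1.1 z.2.toNat : ℤ) •
          (P.1 z.1.1 * (d^[z.2.toNat] (Q.1 z.1.2.1) *
            d^[(z.1.1 + z.1.2.1 + z.1.2.2 - N - z.2).toNat] (R.1 z.1.2.2))) := by
  have hd0 : d 0 = 0 := d_zero' hadd
  have hQR : ∀ J > m + p, (pdoMul d Q R).1 J = 0 := pdoMul_orderLE d hd0 Q R hm hp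
  have h1 : (pdoMul d P (pdoMul d Q R)).1 N
      = ∑ i ∈ Icc (N - (m + p)) n, ∑ J ∈ Icc (N - i) (m + p),
          ∑ j ∈ Icc (J - p) m, ∑ l ∈ Icc (J - j) p, ∑ t ∈ Icc (0:ℤ) (i + J - N),
            (Ring.choose i (i + J - N).toNat * Ring.choose j (j + l - J).toNat *
                ((i + J - N).toNat.choose t.toNat : ℤ)) •
              (P.1 i * (d^[(i + J - N).toNat - t.toNat] (Q.1 j) *
                d^[t.toNat + (j + l - J).toNat] (R.1 l))) := by
    rw [pdoMul_coeff d hd0 P (pdoMul d Q R) hn hQR N]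
    refine sum_congr rfl fun i hi => sum_congr rfl fun J hJ => ?_
    simp only [mem_Icc] at hi hJ
    unfold pdoTerm
    rw [pdoMul_coeff d hd0 Q R hm hp J, iter_d_sum hadd, Finset.mul_sum, Finset.smul_sum]
    refine sum_congr rfl fun j hj => ?_
    rw [iter_d_sum hadd, Finset.mul_sum, Finset.smul_sum]
    refine sum_congr rfl fun l hl => ?_
    simp only [mem_Icc] at hj hl
    unfold pdoTerm
    rw [iter_d_zsmul hadd, iter_leibniz hadd hleib]
    simp only [Nat.succ_eq_add_one]
    rw [range_to_Icc]
    have hKcast : (((i + J - N).toNat : ℕ) : ℤ) = i + J - N := Int.toNat_of_nonneg (by omega)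
    rw [hKcast, Finset.smul_sum, Finset.mul_sum, Finset.smul_sum]
    refine sum_congr rfl fun t ht => ?_
    simp only [mem_Icc] at ht
    rw [← Function.iterate_add_apply, mul_smul_comm, mul_smul_comm,
      ← Nat.cast_smul_eq_nsmul ℤ, smul_smul, smul_smul]
  rw [h1, Finset.sum_sigma', Finset.sum_sigma', Finset.sum_sigma', Finset.sum_sigma']
  have h2 : ∑ x ∈ ((((Icc (N - (m + p)) n).sigma (fun i => Icc (N - i) (m + p))).sigma
        (fun q => Icc (q.2 - p) m)).sigma (fun r => Icc (r.1.2 - r.2) p)).sigma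
        (fun w => Icc (0:ℤ) (w.1.1.1 + w.1.1.2 - N)),
      (Ring.choose x.1.1.1.1 (x.1.1.1.1 + x.1.1.1.2 - N).toNat *
          Ring.choose x.1.1.2 (x.1.1.2 + x.1.2 - x.1.1.1.2).toNat *
          ((x.1.1.1.1 + x.1.1.1.2 - N).toNat.choose x.2.toNat : ℤ)) •
        (P.1 x.1.1.1.1 * (d^[(x.1.1.1.1 + x.1.1.1.2 - N).toNat - x.2.toNat] (Q.1 x.1.1.2) *
          d^[x.2.toNat + (x.1.1.2 + x.1.2 - x.1.1.1.2).toNat] (R.1 x.1.2)))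
      = ∑ y ∈ ((Icc (N - m - p) n ×ˢ Icc (N - n - p) m ×ˢ Icc (N - n - m) p).sigma
            (fun y => Icc (0:ℤ) (y.1 + y.2.1 + y.2.2 - N))).sigma
            (fun z => Icc z.2 (z.1.1 + z.1.2.1 + z.1.2.2 - N)),
          ((y.2.toNat.choose (y.2 - y.1.2).toNat : ℤ) * Ring.choose y.1.1.1 y.2.toNat *
              Ring.choose y.1.1.2.1 (y.1.1.1 + y.1.1.2.1 + y.1.1.2.2 - N - y.2).toNat) •
            (P.1 y.1.1.1 * (d^[y.1.2.toNat] (Q.1 y.1.1.2.1) *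
              d^[(y.1.1.1 + y.1.1.2.1 + y.1.1.2.2 - N - y.1.2).toNat] (R.1 y.1.1.2.2))) := by
    refine Finset.sum_nbij'
      (fun x => ⟨⟨(x.1.1.1.1, x.1.1.2, x.1.2),
          x.1.1.1.1 + x.1.1.1.2 - N - x.2⟩, x.1.1.1.1 + x.1.1.1.2 - N⟩)
      (fun y => ⟨⟨⟨⟨y.1.1.1, y.2 + N - y.1.1.1⟩, y.1.1.2.1⟩, y.1.1.2.2⟩, y.2 - y.1.2⟩)
      ?_ ?_ ?_ ?_ ?_
    · intro x hx
      simp only [mem_sigma, mem_product, mem_Icc] at hx ⊢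
      omega
    · intro y hy
      simp only [mem_sigma, mem_product, mem_Icc] at hy ⊢
      omega
    · intro x _
      obtain ⟨⟨⟨⟨i, J⟩, j⟩, l⟩, t⟩ := x
      simp only
      have e1 : i + J - N + N - i = J := by omega
      have e2 : i + J - N - (i + J - N - t) = t := by omega
      rw [e1, e2]
    · intro y _
      obtain ⟨⟨⟨i, j, l⟩, α⟩, K⟩ := y
      simp only
      have e1 : i + (K + N - i) - N - (K - α) = α := by omega
      have e2 : i + (K + N - i) - N = K := by omega
      rw [e1, e2]
    · intro x hx
      obtain ⟨⟨⟨⟨i, J⟩, j⟩, l⟩, t⟩ := x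
      simp only [mem_sigma, mem_product, mem_Icc] at hx
      simp only
      have e1 : (i + j + l - N - (i + J - N - t)).toNat
          = t.toNat + (j + l - J).toNat := by omega
      have e2 : (i + J - N - t).toNat = (i + J - N).toNat - t.toNat := by omega
      have e3 : (i + J - N - (i + J - N - t)).toNat = t.toNat := by omega
      have e4 : (i + j + l - N - (i + J - N)).toNat = (j + l - J).toNat := by omega
      rw [e1, e2, e3, e4]
      congr 1
      ring
  rw [h2, Finset.sum_sigma]
  refine sum_congr rfl fun z hz => ?_
  obtain ⟨⟨i, j, l⟩, α⟩ := z
  simp only [mem_sigma, mem_product, mem_Icc] at hz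
  simp only
  rw [← Finset.sum_smul, scalar_sum i j α (i + j + l - N) hz.2.1 hz.2.2,
    mul_comm (Ring.choose i α.toNat)]
end Assoc2

/-- the generalized Leibniz rule endows the set of pseudodifferential
operators over a commutative algebra `A` (over a field `K` of characteristic zero)
with derivation `∂ = d` with the structure of an associative (abelian-group-based)
ring with identity element `1·∂^0`. -/
theorem pdo_ring_structure (K : Type) [Field K] [CharZero K]
    {A : Type} [CommRing A] [Algebra K A] (d : A → A)
    (hadd : ∀ a b : A, d (a + b) = d a + d b)
    (hleib : ∀ a b : A, d (a * b) = a * d b + d a * b) :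
    -- additive abelian group laws (pointwise addition)
    (∀ P Q : PDO A, pdoAdd P Q = pdoAdd Q P) ∧
    (∀ P Q R : PDO A, pdoAdd (pdoAdd P Q) R = pdoAdd P (pdoAdd Q R)) ∧
    (∀ P : PDO A, pdoAdd (pdoZero A) P = P) ∧
    (∀ P : PDO A, pdoAdd P (pdoNeg P) = pdoZero A) ∧
    -- associativity of the Leibniz product
    (∀ P Q R : PDO A, pdoMul d (pdoMul d P Q) R = pdoMul d P (pdoMul d Q R)) ∧
    -- `1·∂^0` is a two-sided identity
    (∀ P : PDO A, pdoMul d (pdoOne A) P = P) ∧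
    (∀ P : PDO A, pdoMul d P (pdoOne A) = P) ∧
    -- distributivity
    (∀ P Q R : PDO A, pdoMul d P (pdoAdd Q R) = pdoAdd (pdoMul d P Q) (pdoMul d P R)) ∧
    (∀ P Q R : PDO A, pdoMul d (pdoAdd P Q) R = pdoAdd (pdoMul d P R) (pdoMul d Q R)) := by
  refine ⟨?_, ?_, ?_, ?_, ?_, ?_, ?_, ?_, ?_⟩
  · intro P Q; exact PDO.ext' fun N => add_comm (P.1 N) (Q.1 N)
  · intro P Q R; exact PDO.ext' fun N => add_assoc (P.1 N) (Q.1 N) (R.1 N)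
  · intro P; exact PDO.ext' fun N => zero_add (P.1 N)
  · intro P; exact PDO.ext' fun N => add_neg_cancel (P.1 N)
  · intro P Q R
    refine PDO.ext' fun N => ?_
    rw [assoc_lhs d hadd P Q R P.2.choose_spec Q.2.choose_spec R.2.choose_spec N,
        assoc_rhs d hadd hleib P Q R P.2.choose_spec Q.2.choose_spec R.2.choose_spec N]
  · exact pdoOne_mul d hadd
  · exact pdoMul_one d hadd hleib
  · exact pdoMul_add d hadd
  · exact pdoAdd_mul d hadd
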